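/- Let r ≥ 1 and n ≥ 1, let d₁ ≥ d₂ ≥ … ≥ d_r > 0, u ∈ ℝ^r, σ > 0, and let η > 0, ρ ≥ 0 satisfy 0 < 1 − ηd_i − ηρd_i² < 1 for all i. For s ≥ 0 define Error_s(k) = (1/n)·Σ_{i=1}^r (1 − ηd_i − η·s·d_i²)^{2k} d_i u_i² + (σ²/n)·Σ_{i=1}^r (1 − (1 − ηd_i − η·s·d_i²)^k)². Suppose there exists a constant c₀ > 1 with 1 − ηd_r ≤ c₀·(1 − ηd₁ − ηρd₁²) and 1 − ηd₁ ≥ √c₀·(1 − ηd_r − ηρd_r²). Let SNR = (Σ_{i=1}^r d_i u_i²)/(r σ²) and assume SNR ≥ 1. Then for every natural number k with k ≤ log(2/(SNR + 1)) / log((1 − ηd₁ − ηρd₁²)² / (1 − ηd_r − ηρd_r²)), one has Error_ρ(k) ≤ Error₀(k). -/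

import Mathlib

private lemma sam_aux_chain (X Y P Q C S : ℝ)
    (hX0 : 0 ≤ X) (hY0 : 0 ≤ Y) (hXY : X ≤ Y) (hXP : X ≤ P) (hP1 : P ≤ 1)
    (hY1 : Y ≤ 1) (hXQ : X ≤ Q) (hQ : Q ≤ C * X) (hCP : C * (Y * Y) ≤ P * P)
    (hC1 : 1 ≤ C) (hS : 0 < S) (hkey : 2 ≤ (S + 1) * Y) :
    (Q - X) * (2 - P - X) ≤ S * (P * P - Y * Y) := by
  have h1 : (Q - X) * (2 - P - X) ≤ (C * X - X) * (2 - 2 * X) := by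
    apply mul_le_mul (by linarith) (by linarith) (by linarith) (by nlinarith)
  have hx : X * (2 - 2 * X) ≤ Y * (2 - Y) := by
    nlinarith [mul_nonneg (sub_nonneg.mpr hXY) (show (0:ℝ) ≤ 2 - Y - X by linarith),
      sq_nonneg X]
  have h2 : (C * X - X) * (2 - 2 * X) ≤ (C - 1) * (Y * (2 - Y)) := by
    calc (C * X - X) * (2 - 2 * X) = (C - 1) * (X * (2 - 2 * X)) := by ring
      _ ≤ (C - 1) * (Y * (2 - Y)) := mul_le_mul_of_nonneg_left hx (by linarith)
  have h3 : (C - 1) * (Y * (2 - Y)) ≤ (C - 1) * (S * (Y * Y)) := by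
    apply mul_le_mul_of_nonneg_left ?_ (by linarith)
    nlinarith [mul_le_mul_of_nonneg_left (show 2 - Y ≤ S * Y by linarith) hY0]
  have h4 : (C - 1) * (S * (Y * Y)) ≤ S * (P * P - Y * Y) := by
    nlinarith [mul_le_mul_of_nonneg_left hCP hS.le]
  linarith

set_option maxHeartbeats 1000000 in
/-- Under a spectral gap condition and a bound on the number of iterations depending on
the signal-to-noise ratio, the prediction error of SAM is at most that of gradient
descent (ReLU network / linear regression model). -/
theorem sam_error_le_gd_error_relu (r n : ℕ) (hr : 0 < r) (hn : 0 < n)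
    (d u : Fin r → ℝ)
    (hmono : ∀ i j : Fin r, i ≤ j → d j ≤ d i)
    (hpos : ∀ i, 0 < d i)
    (σ : ℝ) (hσ : 0 < σ)
    (η ρ : ℝ) (hη : 0 < η) (hρ : 0 ≤ ρ)
    (hcontr : ∀ i, 0 < 1 - η * d i - η * ρ * d i ^ 2 ∧
        1 - η * d i - η * ρ * d i ^ 2 < 1)
    (Err : ℝ → ℕ → ℝ)
    (hErr : ∀ s k, Err s k
        = (1 / (n : ℝ)) *
            (∑ i, (1 - η * d i - η * s * d i ^ 2) ^ (2 * k) * d i * u i ^ 2)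
          + (σ ^ 2 / (n : ℝ)) *
            (∑ i, (1 - (1 - η * d i - η * s * d i ^ 2) ^ k) ^ 2))
    (d1 dr : ℝ)
    (hd1 : d1 = d ⟨0, hr⟩)
    (hdr : dr = d ⟨r - 1, Nat.sub_lt hr Nat.one_pos⟩)
    (c0 : ℝ) (hc0 : 1 < c0)
    (hcond1 : 1 - η * dr ≤ c0 * (1 - η * d1 - η * ρ * d1 ^ 2))
    (hcond2 : Real.sqrt c0 * (1 - η * dr - η * ρ * dr ^ 2) ≤ 1 - η * d1)
    (SNR : ℝ) (hSNR : SNR = (∑ i, d i * u i ^ 2) / (r * σ ^ 2))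
    (hSNR1 : 1 ≤ SNR) :
    ∀ k : ℕ,
      (k : ℝ) ≤ Real.log (2 / (SNR + 1)) /
          Real.log ((1 - η * d1 - η * ρ * d1 ^ 2) ^ 2 /
            (1 - η * dr - η * ρ * dr ^ 2)) →
        Err ρ k ≤ Err 0 k := by
  subst hd1 hdr
  intro k hk
  set i1 : Fin r := ⟨0, hr⟩ with hi1
  set ir : Fin r := ⟨r - 1, Nat.sub_lt hr Nat.one_pos⟩ with hir
  -- extremal factors
  set A1 : ℝ := 1 - η * d i1 with hA1def
  set Ar : ℝ := 1 - η * d ir with hArdef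
  set B1 : ℝ := A1 - η * ρ * d i1 ^ 2 with hB1def
  set Br : ℝ := Ar - η * ρ * d ir ^ 2 with hBrdef
  have hd1pos : 0 < d i1 := hpos i1
  have hdrpos : 0 < d ir := hpos ir
  have hB1pos : 0 < B1 := by rw [hB1def, hA1def]; exact (hcontr i1).1
  have hB1lt : B1 < 1 := by rw [hB1def, hA1def]; exact (hcontr i1).2
  have hBrpos : 0 < Br := by rw [hBrdef, hArdef]; exact (hcontr ir).1
  have hBrlt : Br < 1 := by rw [hBrdef, hArdef]; exact (hcontr ir).2
  have hdr_le_d1 : d ir ≤ d i1 := by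
    apply hmono i1 ir
    rw [hi1, hir, Fin.le_def]
    exact Nat.zero_le _
  have hηρ : 0 ≤ η * ρ := mul_nonneg hη.le hρ
  have hB1A1 : B1 ≤ A1 := by
    have : 0 ≤ η * ρ * d i1 ^ 2 := by positivity
    rw [hB1def]; linarith
  have hBrAr : Br ≤ Ar := by
    have : 0 ≤ η * ρ * d ir ^ 2 := by positivity
    rw [hBrdef]; linarith
  have hA1Ar : A1 ≤ Ar := by
    rw [hA1def, hArdef]
    have := mul_le_mul_of_nonneg_left hdr_le_d1 hη.le
    linarith
  have hB1Br : B1 ≤ Br := by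
    rw [hB1def, hBrdef, hA1def, hArdef]
    have h1 := mul_le_mul_of_nonneg_left hdr_le_d1 hη.le
    have h2 : η * ρ * d ir ^ 2 ≤ η * ρ * d i1 ^ 2 :=
      mul_le_mul_of_nonneg_left (pow_le_pow_left₀ hdrpos.le hdr_le_d1 2) hηρ
    linarith
  have hA1pos : 0 < A1 := lt_of_lt_of_le hB1pos hB1A1
  have hA1lt : A1 < 1 := by
    rw [hA1def]; have := mul_pos hη hd1pos; linarith
  have hArpos : 0 < Ar := lt_of_lt_of_le hBrpos hBrAr
  have hArlt : Ar < 1 := by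
    rw [hArdef]; have := mul_pos hη hdrpos; linarith
  have hc0pos : 0 < c0 := lt_trans one_pos hc0
  have hSNRpos : 0 < SNR := lt_of_lt_of_le one_pos hSNR1
  -- the key consequence of the iteration bound : 2 ≤ (SNR+1) * Br^k
  have hkey : 2 ≤ (SNR + 1) * Br ^ k := by
    set q : ℝ := B1 ^ 2 / Br with hq
    have hqpos : 0 < q := by positivity
    have hqBr : q ≤ Br := by
      rw [hq, div_le_iff₀ hBrpos]
      calc B1 ^ 2 = B1 * B1 := by ring
        _ ≤ Br * Br := mul_le_mul hB1Br hB1Br hB1pos.le hBrpos.le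
    have hqlt1 : q < 1 := lt_of_le_of_lt hqBr hBrlt
    have hlogq : Real.log q < 0 := Real.log_neg hqpos hqlt1
    have h2pos : (0:ℝ) < 2 / (SNR + 1) := by positivity
    have hkl : Real.log (2 / (SNR + 1)) ≤ (k : ℝ) * Real.log q :=
      (le_div_iff_of_neg hlogq).mp hk
    have hqk : 2 / (SNR + 1) ≤ q ^ k := by
      have : Real.log (2 / (SNR + 1)) ≤ Real.log (q ^ k) := by
        rw [Real.log_pow]; exact hkl
      exact (Real.log_le_log_iff h2pos (pow_pos hqpos k)).mp this
    have hqBrk : q ^ k ≤ Br ^ k := pow_le_pow_left₀ hqpos.le hqBr k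
    have h2Br : 2 / (SNR + 1) ≤ Br ^ k := le_trans hqk hqBrk
    rw [div_le_iff₀ (by linarith : (0:ℝ) < SNR + 1)] at h2Br
    calc (2:ℝ) ≤ Br ^ k * (SNR + 1) := h2Br
      _ = (SNR + 1) * Br ^ k := mul_comm _ _
  -- power facts
  have hB1k1 : B1 ^ k ≤ 1 := pow_le_one₀ hB1pos.le hB1lt.le
  have hA1k1 : A1 ^ k ≤ 1 := pow_le_one₀ hA1pos.le hA1lt.le
  have hBrk1 : Br ^ k ≤ 1 := pow_le_one₀ hBrpos.le hBrlt.le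
  have hB1A1k : B1 ^ k ≤ A1 ^ k := pow_le_pow_left₀ hB1pos.le hB1A1 k
  have hB1Brk : B1 ^ k ≤ Br ^ k := pow_le_pow_left₀ hB1pos.le hB1Br k
  have hB1knn : 0 ≤ B1 ^ k := pow_nonneg hB1pos.le k
  have hBrknn : 0 ≤ Br ^ k := pow_nonneg hBrpos.le k
  have hc0k : 1 ≤ c0 ^ k := one_le_pow₀ hc0.le
  have hArc0 : Ar ^ k ≤ c0 ^ k * B1 ^ k := by
    have h1 : Ar ≤ c0 * B1 := hcond1
    calc Ar ^ k ≤ (c0 * B1) ^ k := pow_le_pow_left₀ hArpos.le h1 k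
      _ = c0 ^ k * B1 ^ k := mul_pow c0 B1 k
  have hA1c0 : c0 ^ k * (Br ^ k * Br ^ k) ≤ A1 ^ k * A1 ^ k := by
    have hsq : c0 * (Br * Br) ≤ A1 * A1 := by
      have h1 : Real.sqrt c0 * Br ≤ A1 := hcond2
      have h2 : Real.sqrt c0 * Real.sqrt c0 = c0 := Real.mul_self_sqrt hc0pos.le
      have h3 : 0 ≤ Real.sqrt c0 * Br := mul_nonneg (Real.sqrt_nonneg _) hBrpos.le
      calc c0 * (Br * Br) = (Real.sqrt c0 * Real.sqrt c0) * (Br * Br) := by rw [h2]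
        _ = (Real.sqrt c0 * Br) * (Real.sqrt c0 * Br) := by ring
        _ ≤ A1 * A1 := mul_le_mul h1 h1 h3 hA1pos.le
    calc c0 ^ k * (Br ^ k * Br ^ k) = (c0 * (Br * Br)) ^ k := by
          rw [mul_pow, mul_pow]
      _ ≤ (A1 * A1) ^ k := pow_le_pow_left₀ (by positivity) hsq k
      _ = A1 ^ k * A1 ^ k := mul_pow A1 A1 k
  -- the master inequality (*)
  have hstar : (Ar ^ k - B1 ^ k) * (2 - A1 ^ k - B1 ^ k)
      ≤ SNR * (A1 ^ k * A1 ^ k - Br ^ k * Br ^ k) := by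
    apply sam_aux_chain (B1 ^ k) (Br ^ k) (A1 ^ k) (Ar ^ k) (c0 ^ k) SNR hB1knn hBrknn
      hB1Brk hB1A1k hA1k1 hBrk1 ?_ hArc0 hA1c0 hc0k hSNRpos hkey
    exact pow_le_pow_left₀ hB1pos.le (le_trans hB1Br hBrAr) k
  -- total signal
  have hrσ : (0:ℝ) < (r : ℝ) * σ ^ 2 := by
    have : (0:ℝ) < (r : ℝ) := by exact_mod_cast hr
    positivity
  have hT : (∑ i, d i * u i ^ 2) = SNR * ((r : ℝ) * σ ^ 2) := by
    rw [hSNR, div_mul_cancel₀]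
    exact ne_of_gt hrσ
  -- combined coefficient inequality
  have hC : (Br ^ k * Br ^ k - A1 ^ k * A1 ^ k) * (SNR * ((r : ℝ) * σ ^ 2))
      + σ ^ 2 * ((r : ℝ) * ((Ar ^ k - B1 ^ k) * (2 - A1 ^ k - B1 ^ k))) ≤ 0 := by
    have h := mul_le_mul_of_nonneg_left hstar hrσ.le
    have h2 : ((r : ℝ) * σ ^ 2) * ((Ar ^ k - B1 ^ k) * (2 - A1 ^ k - B1 ^ k))
        - ((r : ℝ) * σ ^ 2) * (SNR * (A1 ^ k * A1 ^ k - Br ^ k * Br ^ k)) ≤ 0 :=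
      sub_nonpos.mpr h
    calc (Br ^ k * Br ^ k - A1 ^ k * A1 ^ k) * (SNR * ((r : ℝ) * σ ^ 2))
          + σ ^ 2 * ((r : ℝ) * ((Ar ^ k - B1 ^ k) * (2 - A1 ^ k - B1 ^ k)))
        = ((r : ℝ) * σ ^ 2) * ((Ar ^ k - B1 ^ k) * (2 - A1 ^ k - B1 ^ k))
          - ((r : ℝ) * σ ^ 2) * (SNR * (A1 ^ k * A1 ^ k - Br ^ k * Br ^ k)) := by ring
      _ ≤ 0 := h2
  -- pointwise facts
  have hb : ∀ i : Fin r, B1 ≤ 1 - η * d i - η * ρ * d i ^ 2 ∧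
      1 - η * d i - η * ρ * d i ^ 2 ≤ Br ∧
      A1 ≤ 1 - η * d i ∧ 1 - η * d i ≤ Ar ∧
      1 - η * d i - η * ρ * d i ^ 2 ≤ 1 - η * d i := by
    intro i
    have hdi1 : d i ≤ d i1 := by
      apply hmono i1 i
      rw [hi1, Fin.le_def]
      exact Nat.zero_le _
    have hdir : d ir ≤ d i := by
      apply hmono i ir
      rw [hir, Fin.le_def]
      exact Nat.le_sub_one_of_lt i.isLt
    have hdip : 0 < d i := hpos i
    have f1 := mul_le_mul_of_nonneg_left hdi1 hη.le
    have f2 : η * ρ * d i ^ 2 ≤ η * ρ * d i1 ^ 2 :=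
      mul_le_mul_of_nonneg_left (pow_le_pow_left₀ hdip.le hdi1 2) hηρ
    have f3 := mul_le_mul_of_nonneg_left hdir hη.le
    have f4 : η * ρ * d ir ^ 2 ≤ η * ρ * d i ^ 2 :=
      mul_le_mul_of_nonneg_left (pow_le_pow_left₀ hdrpos.le hdir 2) hηρ
    have f5 : 0 ≤ η * ρ * d i ^ 2 := by positivity
    refine ⟨?_, ?_, ?_, ?_, by linarith⟩
    · rw [hB1def, hA1def]; linarith
    · rw [hBrdef, hArdef]; linarith
    · rw [hA1def]; linarith
    · rw [hArdef]; linarith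
  -- rewrite the errors
  rw [hErr, hErr]
  simp only [mul_zero, zero_mul, sub_zero]
  -- bias sum bound
  have hbias : (∑ i, (1 - η * d i - η * ρ * d i ^ 2) ^ (2 * k) * d i * u i ^ 2)
      ≤ (∑ i, (1 - η * d i) ^ (2 * k) * d i * u i ^ 2)
        + (Br ^ k * Br ^ k - A1 ^ k * A1 ^ k) * (SNR * ((r : ℝ) * σ ^ 2)) := by
    have hsum := Finset.sum_le_sum (s := Finset.univ) (f := fun i : Fin r =>
        (1 - η * d i - η * ρ * d i ^ 2) ^ (2 * k) * d i * u i ^ 2)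
      (g := fun i : Fin r => (1 - η * d i) ^ (2 * k) * d i * u i ^ 2
        + (Br ^ k * Br ^ k - A1 ^ k * A1 ^ k) * (d i * u i ^ 2)) ?_
    · have hsplit : (∑ i, ((1 - η * d i) ^ (2 * k) * d i * u i ^ 2
          + (Br ^ k * Br ^ k - A1 ^ k * A1 ^ k) * (d i * u i ^ 2)))
          = (∑ i, (1 - η * d i) ^ (2 * k) * d i * u i ^ 2)
            + (Br ^ k * Br ^ k - A1 ^ k * A1 ^ k) * (∑ i, d i * u i ^ 2) := by
        rw [Finset.sum_add_distrib, ← Finset.mul_sum]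
      rw [hsplit, hT] at hsum
      exact hsum
    · intro i _
      obtain ⟨hb1, hb2, ha1, ha2, hba⟩ := hb i
      have hbipos : 0 < 1 - η * d i - η * ρ * d i ^ 2 := (hcontr i).1
      have haipos : 0 < 1 - η * d i := lt_of_lt_of_le hbipos hba
      have hcoef : (1 - η * d i - η * ρ * d i ^ 2) ^ (2 * k)
          ≤ (1 - η * d i) ^ (2 * k) + (Br ^ k * Br ^ k - A1 ^ k * A1 ^ k) := by
        have e1 : (1 - η * d i - η * ρ * d i ^ 2) ^ (2 * k) ≤ Br ^ k * Br ^ k := by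
          calc (1 - η * d i - η * ρ * d i ^ 2) ^ (2 * k)
              = ((1 - η * d i - η * ρ * d i ^ 2) * (1 - η * d i - η * ρ * d i ^ 2)) ^ k := by
                rw [two_mul, pow_add, ← mul_pow]
            _ ≤ (Br * Br) ^ k := pow_le_pow_left₀ (by positivity)
                (mul_le_mul hb2 hb2 hbipos.le hBrpos.le) k
            _ = Br ^ k * Br ^ k := mul_pow Br Br k
        have e2 : A1 ^ k * A1 ^ k ≤ (1 - η * d i) ^ (2 * k) := by
          calc A1 ^ k * A1 ^ k = (A1 * A1) ^ k := (mul_pow A1 A1 k).symm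
            _ ≤ ((1 - η * d i) * (1 - η * d i)) ^ k := pow_le_pow_left₀ (by positivity)
                (mul_le_mul ha1 ha1 hA1pos.le haipos.le) k
            _ = (1 - η * d i) ^ (2 * k) := by rw [two_mul, pow_add, ← mul_pow]
        linarith
      have hdu : 0 ≤ d i * u i ^ 2 := mul_nonneg (hpos i).le (sq_nonneg _)
      calc (1 - η * d i - η * ρ * d i ^ 2) ^ (2 * k) * d i * u i ^ 2
          = (1 - η * d i - η * ρ * d i ^ 2) ^ (2 * k) * (d i * u i ^ 2) := by ring
        _ ≤ ((1 - η * d i) ^ (2 * k) + (Br ^ k * Br ^ k - A1 ^ k * A1 ^ k))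
              * (d i * u i ^ 2) := mul_le_mul_of_nonneg_right hcoef hdu
        _ = (1 - η * d i) ^ (2 * k) * d i * u i ^ 2
              + (Br ^ k * Br ^ k - A1 ^ k * A1 ^ k) * (d i * u i ^ 2) := by ring
  -- variance sum bound
  have hvar : (∑ i, (1 - (1 - η * d i - η * ρ * d i ^ 2) ^ k) ^ 2)
      ≤ (∑ i, (1 - (1 - η * d i) ^ k) ^ 2)
        + (r : ℝ) * ((Ar ^ k - B1 ^ k) * (2 - A1 ^ k - B1 ^ k)) := by
    have hsum := Finset.sum_le_sum (s := Finset.univ) (f := fun i : Fin r =>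
        (1 - (1 - η * d i - η * ρ * d i ^ 2) ^ k) ^ 2)
      (g := fun i : Fin r => (1 - (1 - η * d i) ^ k) ^ 2
        + (Ar ^ k - B1 ^ k) * (2 - A1 ^ k - B1 ^ k)) ?_
    · have hsplit : (∑ _i : Fin r, ((Ar ^ k - B1 ^ k) * (2 - A1 ^ k - B1 ^ k)))
          = (r : ℝ) * ((Ar ^ k - B1 ^ k) * (2 - A1 ^ k - B1 ^ k)) := by
        rw [Finset.sum_const, Finset.card_univ, Fintype.card_fin, nsmul_eq_mul]
      rw [Finset.sum_add_distrib, hsplit] at hsum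
      exact hsum
    · intro i _
      obtain ⟨hb1, hb2, ha1, ha2, hba⟩ := hb i
      have hbipos : 0 < 1 - η * d i - η * ρ * d i ^ 2 := (hcontr i).1
      have haipos : 0 < 1 - η * d i := lt_of_lt_of_le hbipos hba
      have hbik1 : (1 - η * d i - η * ρ * d i ^ 2) ^ k ≤ 1 :=
        pow_le_one₀ hbipos.le (le_trans hb2 hBrlt.le)
      have haik1 : (1 - η * d i) ^ k ≤ 1 := pow_le_one₀ haipos.le (le_trans ha2 hArlt.le)
      have hbaik : (1 - η * d i - η * ρ * d i ^ 2) ^ k ≤ (1 - η * d i) ^ k :=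
        pow_le_pow_left₀ hbipos.le hba k
      have haiAr : (1 - η * d i) ^ k ≤ Ar ^ k := pow_le_pow_left₀ haipos.le ha2 k
      have hB1bi : B1 ^ k ≤ (1 - η * d i - η * ρ * d i ^ 2) ^ k :=
        pow_le_pow_left₀ hB1pos.le hb1 k
      have hA1ai : A1 ^ k ≤ (1 - η * d i) ^ k := pow_le_pow_left₀ hA1pos.le ha1 k
      have hprod : ((1 - η * d i) ^ k - (1 - η * d i - η * ρ * d i ^ 2) ^ k)
            * (2 - (1 - η * d i) ^ k - (1 - η * d i - η * ρ * d i ^ 2) ^ k)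
          ≤ (Ar ^ k - B1 ^ k) * (2 - A1 ^ k - B1 ^ k) :=
        mul_le_mul (by linarith) (by linarith) (by linarith) (by linarith)
      have hexp : (1 - (1 - η * d i - η * ρ * d i ^ 2) ^ k) ^ 2
          = (1 - (1 - η * d i) ^ k) ^ 2
            + ((1 - η * d i) ^ k - (1 - η * d i - η * ρ * d i ^ 2) ^ k)
              * (2 - (1 - η * d i) ^ k - (1 - η * d i - η * ρ * d i ^ 2) ^ k) := by
        ring
      exact hexp.trans_le (add_le_add_right hprod _)
  -- combine
  have h1n : (0:ℝ) ≤ 1 / (n : ℝ) := by positivity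
  have hσn : (0:ℝ) ≤ σ ^ 2 / (n : ℝ) := by positivity
  have e1 := mul_le_mul_of_nonneg_left hbias h1n
  have e2 := mul_le_mul_of_nonneg_left hvar hσn
  have e3 : (1 / (n : ℝ)) * ((Br ^ k * Br ^ k - A1 ^ k * A1 ^ k) * (SNR * ((r : ℝ) * σ ^ 2)))
      + (σ ^ 2 / (n : ℝ)) * ((r : ℝ) * ((Ar ^ k - B1 ^ k) * (2 - A1 ^ k - B1 ^ k))) ≤ 0 := by
    have h := mul_le_mul_of_nonneg_left hC h1n
    have heq : (1 / (n : ℝ)) * ((Br ^ k * Br ^ k - A1 ^ k * A1 ^ k) * (SNR * ((r : ℝ) * σ ^ 2)))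
        + (σ ^ 2 / (n : ℝ)) * ((r : ℝ) * ((Ar ^ k - B1 ^ k) * (2 - A1 ^ k - B1 ^ k)))
        = (1 / (n : ℝ)) * ((Br ^ k * Br ^ k - A1 ^ k * A1 ^ k) * (SNR * ((r : ℝ) * σ ^ 2))
          + σ ^ 2 * ((r : ℝ) * ((Ar ^ k - B1 ^ k) * (2 - A1 ^ k - B1 ^ k)))) := by
      ring
    rw [heq]
    simpa using h
  clear hbias hvar hC hstar hb hErr hcontr hmono hpos hcond1 hcond2 hk hkey hSNR hSNR1 hT
  clear hArc0 hA1c0 hB1def hBrdef hA1def hArdef hηρ hdr_le_d1 hB1A1 hBrAr hA1Ar hB1Br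
  clear hB1k1 hA1k1 hBrk1 hB1A1k hB1Brk hB1knn hBrknn hc0k hrσ
  linarith [e1, e2, e3]
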